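/- For the Vilenkin system, the Fejér kernel at index M_n satisfies: K_{M_n}(x) = M_t/(1 − r_t(x)) if x ∈ I_t \ I_{t+1} with x − x_t e_t ∈ I_n for some t < n; K_{M_n}(x) = (M_n + 1)/2 if x ∈ I_n; and K_{M_n}(x) = 0 otherwise. -/

import Mathlib

noncomputable section
open MeasureTheory Finset Filter

namespace VilPaper

instance (n : ℕ) : TopologicalSpace (ZMod n) := ⊥
instance (n : ℕ) : DiscreteTopology (ZMod n) := ⟨rfl⟩

variable (m : ℕ → ℕ)

abbrev mseq (k : ℕ) : ℕ := m k + 2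
abbrev G := ∀ k, ZMod (mseq m k)

instance : IsTopologicalAddGroup (G m) := by infer_instance
instance : CompactSpace (G m) := by infer_instance
instance : MeasurableSpace (G m) := borel _
instance : BorelSpace (G m) := ⟨rfl⟩

def μV : Measure (G m) := Measure.addHaarMeasure ⊤

/-- The generalized number system: `M_0 = 1`, `M_{k+1} = m_k M_k`. -/
def Mgen : ℕ → ℕ
  | 0 => 1
  | k + 1 => mseq m k * Mgen k

/-- The cylinder sets `I_n(x)`. -/
def cyl (n : ℕ) (x : G m) : Set (G m) := {y | ∀ i < n, y i = x i}

/-- `I_n := I_n(0)`. -/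
def Icyl (n : ℕ) : Set (G m) := cyl m n 0

/-- Generalized Rademacher functions `r_k(x) = exp(2πi x_k / m_k)`. -/
def rad (k : ℕ) (x : G m) : ℂ :=
  Complex.exp (2 * Real.pi * Complex.I * ((x k).val : ℂ) / (mseq m k : ℂ))

/-- The `j`-th digit `n_j` of `n` in the number system `(M_k)`. -/
def digit (n j : ℕ) : ℕ := n / Mgen m j % mseq m j

/-- `|n| = max { j : n_j ≠ 0 }`. -/
def ndeg (n : ℕ) : ℕ := sSup {j | digit m n j ≠ 0}

/-- The Vilenkin system `ψ_n = ∏ r_k^{n_k}`. -/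
def psi (n : ℕ) (x : G m) : ℂ := ∏ k ∈ Finset.range (n + 1), rad m k x ^ digit m n k

/-- Dirichlet kernels `D_n = ∑_{k<n} ψ_k`. -/
def Dker (n : ℕ) (x : G m) : ℂ := ∑ k ∈ Finset.range n, psi m k x

/-- Fejér kernels `K_n = (1/n) ∑_{k=1}^n D_k`. -/
def Kker (n : ℕ) (x : G m) : ℂ := (n : ℂ)⁻¹ * ∑ k ∈ Finset.range n, Dker m (k + 1) x

/-- Vilenkin–Fourier coefficients. -/
def fcoef (f : G m → ℂ) (k : ℕ) : ℂ := ∫ x, f x * (starRingEnd ℂ) (psi m k x) ∂ μV m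

/-- Partial sums `S_n f` of the Vilenkin–Fourier series. -/
def partialSum (f : G m → ℂ) (n : ℕ) (x : G m) : ℂ :=
  ∑ k ∈ Finset.range n, fcoef m f k * psi m k x

/-- Fejér means `σ_n f = (1/n) ∑_{k=1}^n S_k f`. -/
def fejer (f : G m → ℂ) (n : ℕ) (x : G m) : ℂ :=
  (n : ℂ)⁻¹ * ∑ k ∈ Finset.range n, partialSum m f (k + 1) x

/-- `Q_n = ∑_{k<n} q_k`. -/
def Qsum (q : ℕ → ℝ) (n : ℕ) : ℝ := ∑ k ∈ Finset.range n, q k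

/-- The `T` means `T_n f = (1/Q_n) ∑_{k<n} q_k S_k f`. -/
def Tmean (q : ℕ → ℝ) (f : G m → ℂ) (n : ℕ) (x : G m) : ℂ :=
  (Qsum q n : ℂ)⁻¹ * ∑ k ∈ Finset.range n, (q k : ℂ) * partialSum m f k x

/-- Convolution on `G_m`. -/
def conv (f g : G m → ℂ) (x : G m) : ℂ := ∫ t, f t * g (x - t) ∂ μV m

/-- The modulus of continuity `ω_p(δ, f) = sup_{t ∈ I_s, 1/M_s < δ} ‖f(·-t) - f‖_p`. -/
def omega (p : ENNReal) (f : G m → ℂ) (δ : ℝ) : ENNReal :=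
  ⨆ (s : ℕ) (_ : (1 : ℝ) / (Mgen m s : ℝ) < δ) (t : G m) (_ : t ∈ Icyl m s),
    eLpNorm (fun x => f (x - t) - f x) p (μV m)

/-- The Lipschitz class `Lip(α, p)`. -/
def LipClass (p : ENNReal) (α : ℝ) (f : G m → ℂ) : Prop :=
  MemLp f p (μV m) ∧ ∃ C : ℝ, ∀ δ : ℝ, 0 < δ → omega m p f δ ≤ ENNReal.ofReal (C * δ ^ α)

section Aux
variable (m : ℕ → ℕ)

lemma two_le_mseq (k : ℕ) : 2 ≤ mseq m k := Nat.le_add_left 2 (m k)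

lemma Mgen_pos (n : ℕ) : 0 < Mgen m n := by
  induction n with
  | zero => exact Nat.one_pos
  | succ k ih => exact Nat.mul_pos (Nat.lt_of_lt_of_le Nat.zero_lt_two (two_le_mseq m k)) ih

lemma Mgen_mono {k n : ℕ} (h : k ≤ n) : Mgen m k ≤ Mgen m n := by
  induction n with
  | zero => simp [Nat.le_zero.mp h]
  | succ j ih =>
    rcases Nat.lt_or_ge k (j+1) with h'|h'
    · calc Mgen m k ≤ Mgen m j := ih (Nat.lt_succ_iff.mp h')
        _ ≤ mseq m j * Mgen m j := Nat.le_mul_of_pos_left _ (lt_of_lt_of_le Nat.zero_lt_two (two_le_mseq m j))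
        _ = Mgen m (j+1) := rfl
    · have : k = j + 1 := le_antisymm h h'
      simp [this]

lemma two_pow_le_Mgen (n : ℕ) : 2 ^ n ≤ Mgen m n := by
  induction n with
  | zero => simp [Mgen]
  | succ k ih =>
    calc 2 ^ (k+1) = 2 * 2 ^ k := by ring
      _ ≤ mseq m k * Mgen m k := Nat.mul_le_mul (two_le_mseq m k) ih
      _ = Mgen m (k+1) := rfl

lemma Mgen_prod (n : ℕ) : Mgen m n = ∏ k ∈ Finset.range n, mseq m k := by
  induction n with
  | zero => rfl
  | succ k ih => rw [Finset.prod_range_succ, ← ih, Mgen, Nat.mul_comm]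

lemma digit_eq_zero_of_lt {l k : ℕ} (h : l < Mgen m k) : digit m l k = 0 := by
  unfold digit
  rw [Nat.div_eq_of_lt h, Nat.zero_mod]

lemma psi_eq_prod {l n : ℕ} (h : l < Mgen m n) (x : G m) :
    psi m l x = ∏ k ∈ Finset.range n, rad m k x ^ digit m l k := by
  have key : ∀ N : ℕ, n ≤ N → l + 1 ≤ N →
      ∏ k ∈ Finset.range N, rad m k x ^ digit m l k
        = ∏ k ∈ Finset.range n, rad m k x ^ digit m l k := by
    intro N hn hl
    refine (Finset.prod_subset (Finset.range_subset_range.mpr hn) ?_).symm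
    intro k hk hk'
    have hkn : n ≤ k := by
      simp only [Finset.mem_range] at hk hk'
      omega
    have : l < Mgen m k := lt_of_lt_of_le h (Mgen_mono m hkn)
    rw [digit_eq_zero_of_lt m this, pow_zero]
  have key2 : ∀ N : ℕ, l + 1 ≤ N →
      ∏ k ∈ Finset.range N, rad m k x ^ digit m l k
        = ∏ k ∈ Finset.range (l+1), rad m k x ^ digit m l k := by
    intro N hl
    refine (Finset.prod_subset (Finset.range_subset_range.mpr hl) ?_).symm
    intro k hk hk'
    have hkl : l + 1 ≤ k := by
      simp only [Finset.mem_range] at hk hk'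
      omega
    have : l < Mgen m k := by
      calc l < 2 ^ k := lt_of_lt_of_le (Nat.lt_two_pow_self (n := l)) (Nat.pow_le_pow_right (by norm_num) (by omega))
      _ ≤ Mgen m k := two_pow_le_Mgen m k
    rw [digit_eq_zero_of_lt m this, pow_zero]
  set N := max n (l+1)
  rw [psi, ← key2 N (le_max_right _ _), key N (le_max_left _ _) (le_max_right _ _)]

end Aux
section Aux2
variable (m : ℕ → ℕ)

instance (k : ℕ) : NeZero (mseq m k) := ⟨by have := two_le_mseq m k; omega⟩

lemma mseq_cast_ne_zero (k : ℕ) : (mseq m k : ℂ) ≠ 0 :=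
  Nat.cast_ne_zero.mpr (by have := two_le_mseq m k; omega)

lemma rad_pow_mseq (k : ℕ) (x : G m) : rad m k x ^ (mseq m k) = 1 := by
  have hm := mseq_cast_ne_zero m k
  rw [rad, ← Complex.exp_nat_mul]
  have h1 : (mseq m k : ℂ) * (2 * Real.pi * Complex.I * ((x k).val : ℂ) / (mseq m k : ℂ))
      = ((x k).val : ℂ) * (2 * Real.pi * Complex.I) := by
    rw [mul_comm ((mseq m k : ℂ)), div_mul_cancel₀ _ hm]; ring
  rw [h1, Complex.exp_nat_mul, Complex.exp_two_pi_mul_I, one_pow]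

lemma rad_eq_one_of_zero {k : ℕ} {x : G m} (h : x k = 0) : rad m k x = 1 := by
  rw [rad, h]
  simp [ZMod.val_zero]

lemma rad_ne_one_of_ne {k : ℕ} {x : G m} (h : x k ≠ 0) : rad m k x ≠ 1 := by
  intro he
  rw [rad, Complex.exp_eq_one_iff] at he
  obtain ⟨j, hj⟩ := he
  have hm := mseq_cast_ne_zero m k
  have hpi : (2 * Real.pi * Complex.I : ℂ) ≠ 0 := by
    simp [Complex.I_ne_zero, Real.pi_ne_zero]
  have h2 : 2 * (Real.pi:ℂ) * Complex.I * ((x k).val : ℂ)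
      = ((j:ℂ) * (2 * Real.pi * Complex.I)) * (mseq m k : ℂ) := by
    rw [← hj, div_mul_cancel₀ _ hm]
  have h3 : ((x k).val : ℂ) = (j : ℂ) * (mseq m k : ℂ) :=
    mul_left_cancel₀ hpi (by linear_combination h2)
  have h4 : ((x k).val : ℤ) = j * (mseq m k : ℤ) := by exact_mod_cast h3
  have h5 : ((mseq m k : ℤ)) ∣ ((x k).val : ℤ) := ⟨j, by linarith⟩
  have h6 : mseq m k ∣ (x k).val := by exact_mod_cast h5
  have h7 : (x k).val = 0 := by
    rcases h6 with ⟨c, hc⟩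
    have := ZMod.val_lt (x k)
    rcases Nat.eq_zero_or_pos c with h0 | h0
    · simp [hc, h0]
    · exfalso; nlinarith
  exact h ((ZMod.val_eq_zero _).mp h7)

end Aux2
section Aux3
variable (m : ℕ → ℕ)

lemma geom_aux (r : ℂ) (M : ℕ) :
    (r - 1) * ∑ a ∈ Finset.range M, (a : ℂ) * r ^ a
      = ((M : ℂ) - 1) * r ^ M - (∑ a ∈ Finset.range M, r ^ a) + 1 := by
  induction M with
  | zero => simp
  | succ M ih =>
    rw [Finset.sum_range_succ, Finset.sum_range_succ (f := fun a => r ^ a), mul_add]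
    rw [ih]
    push_cast
    ring

lemma geom_sum_eq_zero {r : ℂ} (h1 : r ≠ 1) {M : ℕ} (hM : r ^ M = 1) :
    ∑ a ∈ Finset.range M, r ^ a = 0 := by
  rw [geom_sum_eq h1, hM, sub_self, zero_div]

lemma geom_sum_id_eq {r : ℂ} (h1 : r ≠ 1) {M : ℕ} (hM : r ^ M = 1) :
    ∑ a ∈ Finset.range M, (a : ℂ) * r ^ a = (M : ℂ) / (r - 1) := by
  have hr : r - 1 ≠ 0 := sub_ne_zero.mpr h1
  have := geom_aux r M
  rw [hM, geom_sum_eq_zero h1 hM] at this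
  field_simp
  linear_combination this

lemma gauss_sum (M : ℕ) :
    ∑ a ∈ Finset.range M, (a : ℂ) = (M : ℂ) * ((M : ℂ) - 1) / 2 := by
  induction M with
  | zero => simp
  | succ M ih => rw [Finset.sum_range_succ, ih]; push_cast; ring

-- digit decomposition
lemma digit_add_mul_lt {q r k n : ℕ} (hk : k < n) (hr : r < Mgen m n) :
    digit m (q * Mgen m n + r) k = digit m r k := by
  obtain ⟨c, hc⟩ : Mgen m (k+1) ∣ Mgen m n := by
    rcases Nat.exists_eq_add_of_le hk with ⟨d, hd⟩
    clear hr
    subst hd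
    induction d with
    | zero => simp
    | succ d ih =>
      have : Mgen m (k + 1 + (d+1)) = mseq m (k+1+d) * Mgen m (k+1+d) := by
        show Mgen m ((k+1+d)+1) = _
        rfl
      rw [this]
      exact Dvd.dvd.mul_left (ih (by omega)) _
  have hMk : 0 < Mgen m k := Mgen_pos m k
  unfold digit
  have : q * Mgen m n + r = r + Mgen m k * (q * c * mseq m k) := by
    rw [hc]
    show _ = r + Mgen m k * (q * c * mseq m k)
    have : Mgen m (k+1) = mseq m k * Mgen m k := rfl
    rw [this]
    ring
  rw [this, Nat.add_mul_div_left _ _ hMk, Nat.add_mul_mod_self_right]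

lemma digit_add_mul_self {q r n : ℕ} (hr : r < Mgen m n) (hq : q < mseq m n) :
    digit m (q * Mgen m n + r) n = q := by
  unfold digit
  have h1 : q * Mgen m n + r = r + Mgen m n * q := by ring
  rw [h1, Nat.add_mul_div_left _ _ (Mgen_pos m n), Nat.div_eq_of_lt hr, Nat.zero_add,
    Nat.mod_eq_of_lt hq]
  
lemma psi_mul {q r n : ℕ} (hr : r < Mgen m n) (hq : q < mseq m n) (x : G m) :
    psi m (q * Mgen m n + r) x = rad m n x ^ q * psi m r x := by
  have hlt : q * Mgen m n + r < Mgen m (n+1) := by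
    have : Mgen m (n+1) = mseq m n * Mgen m n := rfl
    rw [this]
    calc q * Mgen m n + r < q * Mgen m n + Mgen m n := by omega
      _ = (q+1) * Mgen m n := by ring
      _ ≤ mseq m n * Mgen m n := Nat.mul_le_mul_right _ (by omega)
  rw [psi_eq_prod m hlt, psi_eq_prod m hr, Finset.prod_range_succ,
    digit_add_mul_self m hr hq, mul_comm]
  congr 1
  exact Finset.prod_congr rfl fun k hk => by
    rw [digit_add_mul_lt m (Finset.mem_range.mp hk) hr]

lemma sum_range_mul_decomp (F : ℕ → ℂ) (a b : ℕ) :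
    ∑ l ∈ Finset.range (a * b), F l
      = ∑ q ∈ Finset.range a, ∑ r ∈ Finset.range b, F (q * b + r) := by
  induction a with
  | zero => simp
  | succ a ih =>
    have : (a + 1) * b = a * b + b := by ring
    rw [this, Finset.sum_range_add, ih, Finset.sum_range_succ]

end Aux3
section Aux4
variable (m : ℕ → ℕ)

/-- `g_k(x) = ∑_{a<m_k} r_k(x)^a`. -/
def gfun (k : ℕ) (x : G m) : ℂ := ∑ a ∈ Finset.range (mseq m k), rad m k x ^ a

/-- `f_k(x) = ∑_{a<m_k} a r_k(x)^a`. -/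
def ffun (k : ℕ) (x : G m) : ℂ := ∑ a ∈ Finset.range (mseq m k), (a : ℂ) * rad m k x ^ a

/-- `B_n(x) = ∑_{l<M_n} l ψ_l(x)`. -/
def Bsum (n : ℕ) (x : G m) : ℂ := ∑ l ∈ Finset.range (Mgen m n), (l : ℂ) * psi m l x

lemma psi_zero (x : G m) : psi m 0 x = 1 := by
  simp [psi, digit]

lemma Dker_Mgen_eq (n : ℕ) (x : G m) :
    Dker m (Mgen m n) x = ∏ k ∈ Finset.range n, gfun m k x := by
  induction n with
  | zero => simp [Dker, Mgen, psi_zero]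
  | succ n ih =>
    have h1 : Mgen m (n+1) = mseq m n * Mgen m n := rfl
    rw [Finset.prod_range_succ, ← ih, Dker, h1,
      sum_range_mul_decomp (fun l => psi m l x) (mseq m n) (Mgen m n)]
    rw [show (∑ q ∈ Finset.range (mseq m n), ∑ r ∈ Finset.range (Mgen m n),
        psi m (q * Mgen m n + r) x)
      = ∑ q ∈ Finset.range (mseq m n), ∑ r ∈ Finset.range (Mgen m n),
        rad m n x ^ q * psi m r x from
      Finset.sum_congr rfl fun q hq => Finset.sum_congr rfl fun r hr =>
        psi_mul m (Finset.mem_range.mp hr) (Finset.mem_range.mp hq) x]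
    rw [← Finset.sum_mul_sum]
    rw [Dker, gfun, mul_comm]

lemma Bsum_succ (n : ℕ) (x : G m) :
    Bsum m (n+1) x = gfun m n x * Bsum m n x
      + (Mgen m n : ℂ) * ffun m n x * Dker m (Mgen m n) x := by
  have h1 : Mgen m (n+1) = mseq m n * Mgen m n := rfl
  rw [Bsum, h1, sum_range_mul_decomp (fun l => (l:ℂ) * psi m l x) (mseq m n) (Mgen m n)]
  rw [show (∑ q ∈ Finset.range (mseq m n), ∑ r ∈ Finset.range (Mgen m n),
      ((q * Mgen m n + r : ℕ) : ℂ) * psi m (q * Mgen m n + r) x)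
    = ∑ q ∈ Finset.range (mseq m n), ∑ r ∈ Finset.range (Mgen m n),
      (rad m n x ^ q * ((r:ℂ) * psi m r x)
        + ((q:ℂ) * rad m n x ^ q) * ((Mgen m n : ℂ) * psi m r x)) from
    Finset.sum_congr rfl fun q hq => Finset.sum_congr rfl fun r hr => by
      rw [psi_mul m (Finset.mem_range.mp hr) (Finset.mem_range.mp hq) x]
      push_cast
      ring]
  rw [Finset.sum_congr rfl fun q _ => Finset.sum_add_distrib]
  rw [Finset.sum_add_distrib]
  congr 1
  · rw [Finset.sum_congr rfl fun q (_ : q ∈ _) => (Finset.mul_sum _ _ _).symm,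
      ← Finset.sum_mul, gfun, Bsum]
  · rw [Finset.sum_congr rfl fun q (_ : q ∈ _) => (Finset.mul_sum _ _ _).symm,
      ← Finset.sum_mul, ffun, Dker, ← Finset.mul_sum]
    ring

lemma Bsum_eq (n : ℕ) (x : G m) :
    Bsum m n x = ∑ j ∈ Finset.range n,
      (Mgen m j : ℂ) * ffun m j x * ∏ k ∈ Finset.range n \ {j}, gfun m k x := by
  induction n with
  | zero => simp [Bsum, Mgen]
  | succ n ih =>
    rw [Bsum_succ, ih, Finset.sum_range_succ]
    have hn : Finset.range (n+1) \ {n} = Finset.range n := by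
      ext k; simp [Finset.mem_sdiff, Finset.mem_range]; omega
    rw [hn]
    have hj : ∀ j ∈ Finset.range n, Finset.range (n+1) \ {j}
        = insert n (Finset.range n \ {j}) := by
      intro j hj
      have := Finset.mem_range.mp hj
      ext k; simp [Finset.mem_sdiff, Finset.mem_range, Finset.mem_insert]; omega
    have hstep : ∑ j ∈ Finset.range n,
        (Mgen m j : ℂ) * ffun m j x * ∏ k ∈ Finset.range (n+1) \ {j}, gfun m k x
        = gfun m n x * ∑ j ∈ Finset.range n,
            (Mgen m j : ℂ) * ffun m j x * ∏ k ∈ Finset.range n \ {j}, gfun m k x := by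
      rw [Finset.mul_sum]
      refine Finset.sum_congr rfl fun j hjm => ?_
      rw [hj j hjm, Finset.prod_insert (by simp)]
      ring
    rw [hstep, Dker_Mgen_eq]

end Aux4
section Aux5
variable (m : ℕ → ℕ)

lemma gfun_eval_zero {k : ℕ} {x : G m} (h : x k = 0) : gfun m k x = (mseq m k : ℂ) := by
  rw [gfun]
  simp [rad_eq_one_of_zero m h]

lemma gfun_eval_ne {k : ℕ} {x : G m} (h : x k ≠ 0) : gfun m k x = 0 :=
  geom_sum_eq_zero (rad_ne_one_of_ne m h) (rad_pow_mseq m k x)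

lemma ffun_eval_zero {k : ℕ} {x : G m} (h : x k = 0) :
    ffun m k x = (mseq m k : ℂ) * ((mseq m k : ℂ) - 1) / 2 := by
  rw [ffun]
  simp only [rad_eq_one_of_zero m h, one_pow, mul_one]
  exact gauss_sum _

lemma ffun_eval_ne {k : ℕ} {x : G m} (h : x k ≠ 0) :
    ffun m k x = (mseq m k : ℂ) / (rad m k x - 1) :=
  geom_sum_id_eq (rad_ne_one_of_ne m h) (rad_pow_mseq m k x)

lemma sum_Dker (N : ℕ) (x : G m) :
    ∑ k ∈ Finset.range N, Dker m (k+1) x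
      = ∑ l ∈ Finset.range N, ((N : ℂ) - (l : ℂ)) * psi m l x := by
  induction N with
  | zero => simp
  | succ N ih =>
    rw [Finset.sum_range_succ, ih,
      show ∑ l ∈ Finset.range (N+1), (((N+1 : ℕ) : ℂ) - (l : ℂ)) * psi m l x
        = ∑ l ∈ Finset.range (N+1), (((N : ℂ) - (l : ℂ)) * psi m l x + psi m l x) from
        Finset.sum_congr rfl fun l _ => by push_cast; ring,
      Finset.sum_add_distrib,
      Finset.sum_range_succ (f := fun l => ((N : ℂ) - (l : ℂ)) * psi m l x), Dker]
    simp

lemma Mgen_cast_ne_zero (n : ℕ) : ((Mgen m n : ℕ) : ℂ) ≠ 0 :=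
  Nat.cast_ne_zero.mpr (Mgen_pos m n).ne'

lemma Mn_mul_Kker (n : ℕ) (x : G m) :
    (Mgen m n : ℂ) * Kker m (Mgen m n) x
      = (Mgen m n : ℂ) * Dker m (Mgen m n) x - Bsum m n x := by
  rw [Kker, ← mul_assoc, mul_inv_cancel₀ (Mgen_cast_ne_zero m n), one_mul, sum_Dker,
    show ∑ l ∈ Finset.range (Mgen m n), (((Mgen m n : ℕ) : ℂ) - (l : ℂ)) * psi m l x
      = ∑ l ∈ Finset.range (Mgen m n),
          (((Mgen m n : ℕ) : ℂ) * psi m l x - (l : ℂ) * psi m l x) from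
      Finset.sum_congr rfl fun l _ => by ring,
    Finset.sum_sub_distrib, ← Finset.mul_sum, Dker, Bsum]

lemma prod_mseq_cast (n : ℕ) : ∏ k ∈ Finset.range n, (mseq m k : ℂ) = (Mgen m n : ℂ) := by
  rw [Mgen_prod]
  push_cast
  rfl

lemma case_In {n : ℕ} {x : G m} (h : ∀ k < n, x k = 0) :
    Kker m (Mgen m n) x = ((Mgen m n : ℂ) + 1) / 2 := by
  have hD : Dker m (Mgen m n) x = (Mgen m n : ℂ) := by
    rw [Dker_Mgen_eq,
      Finset.prod_congr rfl fun k hk => gfun_eval_zero m (h k (Finset.mem_range.mp hk)),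
      prod_mseq_cast]
  have htel : ∑ j ∈ Finset.range n, (((Mgen m (j+1) : ℕ) : ℂ) - ((Mgen m j : ℕ) : ℂ))
      = ((Mgen m n : ℕ) : ℂ) - 1 := by
    rw [Finset.sum_range_sub (f := fun j => ((Mgen m j : ℕ) : ℂ))]
    norm_num [Mgen]
  have hB : Bsum m n x = ((Mgen m n : ℂ) - 1) * (Mgen m n : ℂ) / 2 := by
    rw [Bsum_eq]
    have hterm : ∀ j ∈ Finset.range n,
        (Mgen m j : ℂ) * ffun m j x * ∏ k ∈ Finset.range n \ {j}, gfun m k x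
          = (((Mgen m (j+1) : ℕ) : ℂ) - ((Mgen m j : ℕ) : ℂ)) * (Mgen m n : ℂ) / 2 := by
      intro j hjm
      have hjn := Finset.mem_range.mp hjm
      have hm := mseq_cast_ne_zero m j
      rw [ffun_eval_zero m (h j hjn),
        Finset.prod_congr rfl fun k hk =>
          gfun_eval_zero m (h k (Finset.mem_range.mp (Finset.mem_sdiff.mp hk).1))]
      have hP : (mseq m j : ℂ) * ∏ k ∈ Finset.range n \ {j}, (mseq m k : ℂ)
          = (Mgen m n : ℂ) := by
        rw [← prod_mseq_cast m n,
          Finset.prod_eq_mul_prod_sdiff_singleton_of_mem hjm (fun k => ((mseq m k : ℕ) : ℂ))]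
      have hP' : (∏ k ∈ Finset.range n \ {j}, (mseq m k : ℂ))
          = (Mgen m n : ℂ) / (mseq m j : ℂ) := by
        rw [eq_div_iff hm]; linear_combination hP
      have hsucc : ((Mgen m (j+1) : ℕ) : ℂ) = (mseq m j : ℂ) * (Mgen m j : ℂ) := by
        show ((mseq m j * Mgen m j : ℕ) : ℂ) = _
        push_cast
        rfl
      rw [hP', hsucc, div_eq_mul_inv ((Mgen m n : ℕ) : ℂ)]
      linear_combination ((Mgen m j : ℂ) * ((mseq m j : ℂ) - 1) * ((Mgen m n : ℕ) : ℂ) / 2)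
        * (mul_inv_cancel₀ hm)
    rw [Finset.sum_congr rfl hterm, ← Finset.sum_div, ← Finset.sum_mul, htel]
  have hK := Mn_mul_Kker m n x
  rw [hD, hB] at hK
  have hN := Mgen_cast_ne_zero m n
  refine mul_left_cancel₀ hN ?_
  rw [hK]
  ring

lemma case_one {n t : ℕ} {x : G m} (htn : t < n) (ht : x t ≠ 0)
    (h : ∀ k < n, k ≠ t → x k = 0) :
    Kker m (Mgen m n) x = (Mgen m t : ℂ) / (1 - rad m t x) := by
  have htm : t ∈ Finset.range n := Finset.mem_range.mpr htn
  have hr : rad m t x - 1 ≠ 0 := sub_ne_zero.mpr (rad_ne_one_of_ne m ht)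
  have hD : Dker m (Mgen m n) x = 0 := by
    rw [Dker_Mgen_eq]
    exact Finset.prod_eq_zero htm (gfun_eval_ne m ht)
  have hB : Bsum m n x = (Mgen m t : ℂ) * (Mgen m n : ℂ) / (rad m t x - 1) := by
    rw [Bsum_eq]
    rw [Finset.sum_eq_single_of_mem t htm (fun j hjm hjt => by
      have hterm : (∏ k ∈ Finset.range n \ {j}, gfun m k x) = 0 :=
        Finset.prod_eq_zero (Finset.mem_sdiff.mpr ⟨htm, by simpa using (Ne.symm hjt)⟩)
          (gfun_eval_ne m ht)
      rw [hterm, mul_zero])]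
    have hm := mseq_cast_ne_zero m t
    rw [ffun_eval_ne m ht,
      Finset.prod_congr rfl fun k hk => gfun_eval_zero m
        (h k (Finset.mem_range.mp (Finset.mem_sdiff.mp hk).1)
          (by simpa using (Finset.mem_sdiff.mp hk).2))]
    have hP : (mseq m t : ℂ) * ∏ k ∈ Finset.range n \ {t}, (mseq m k : ℂ)
        = (Mgen m n : ℂ) := by
      rw [← prod_mseq_cast m n,
        Finset.prod_eq_mul_prod_sdiff_singleton_of_mem htm (fun k => ((mseq m k : ℕ) : ℂ))]
    have hP' : (∏ k ∈ Finset.range n \ {t}, (mseq m k : ℂ))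
        = (Mgen m n : ℂ) / (mseq m t : ℂ) := by
      rw [eq_div_iff hm]; linear_combination hP
    rw [hP', div_eq_mul_inv ((Mgen m n : ℕ) : ℂ), div_eq_mul_inv ((mseq m t : ℕ) : ℂ)]
    rw [div_eq_mul_inv]
    linear_combination ((Mgen m t : ℂ) * ((Mgen m n : ℕ) : ℂ) * (rad m t x - 1)⁻¹)
      * (mul_inv_cancel₀ hm)
  have hK := Mn_mul_Kker m n x
  rw [hD, hB, mul_zero] at hK
  have hN := Mgen_cast_ne_zero m n
  have hr' : (1 : ℂ) - rad m t x ≠ 0 := fun hc => hr (by linear_combination -hc)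
  refine mul_left_cancel₀ hN ?_
  rw [hK]
  field_simp [hr, hr']
  ring

lemma case_two {n s t : ℕ} {x : G m} (hsn : s < n) (htn : t < n) (hst : s ≠ t)
    (hs : x s ≠ 0) (ht : x t ≠ 0) :
    Kker m (Mgen m n) x = 0 := by
  have hD : Dker m (Mgen m n) x = 0 := by
    rw [Dker_Mgen_eq]
    exact Finset.prod_eq_zero (Finset.mem_range.mpr htn) (gfun_eval_ne m ht)
  have hB : Bsum m n x = 0 := by
    rw [Bsum_eq]
    refine Finset.sum_eq_zero fun j hjm => ?_
    rcases ne_or_eq j s with hjs | hjs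
    · have : (∏ k ∈ Finset.range n \ {j}, gfun m k x) = 0 :=
        Finset.prod_eq_zero
          (Finset.mem_sdiff.mpr ⟨Finset.mem_range.mpr hsn, by simpa using (Ne.symm hjs)⟩)
          (gfun_eval_ne m hs)
      rw [this, mul_zero]
    · have hjt : j ≠ t := by omega
      have : (∏ k ∈ Finset.range n \ {j}, gfun m k x) = 0 :=
        Finset.prod_eq_zero
          (Finset.mem_sdiff.mpr ⟨Finset.mem_range.mpr htn, by simpa using (Ne.symm hjt)⟩)
          (gfun_eval_ne m ht)
      rw [this, mul_zero]
  have hK := Mn_mul_Kker m n x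
  rw [hD, hB, mul_zero, sub_zero] at hK
  exact (mul_left_cancel₀ (Mgen_cast_ne_zero m n) (by rw [hK, mul_zero]))

end Aux5
lemma mem_Icyl_iff (m : ℕ → ℕ) (N : ℕ) (y : G m) : y ∈ Icyl m N ↔ ∀ i < N, y i = 0 := by
  simp [Icyl, cyl]

/-- the explicit formula for the Fejér kernel `K_{M_n}`.
Here `Function.update x t 0` is the element `x - x_t e_t`. -/
theorem fejer_kernel_Mn (m : ℕ → ℕ) (n : ℕ) (x : G m) :
    (∀ t : ℕ, t < n → x ∈ Icyl m t \ Icyl m (t + 1) →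
        Function.update x t 0 ∈ Icyl m n →
        Kker m (Mgen m n) x = (Mgen m t : ℂ) / (1 - rad m t x)) ∧
    (x ∈ Icyl m n → Kker m (Mgen m n) x = ((Mgen m n : ℂ) + 1) / 2) ∧
    ((x ∉ Icyl m n ∧ ¬ ∃ t : ℕ, t < n ∧ x ∈ Icyl m t \ Icyl m (t + 1) ∧
        Function.update x t 0 ∈ Icyl m n) → Kker m (Mgen m n) x = 0) := by
  refine ⟨?_, ?_, ?_⟩
  · intro t htn hx hu
    have h1 : ∀ i < t, x i = 0 := (mem_Icyl_iff m t x).mp hx.1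
    have ht : x t ≠ 0 := by
      intro h0
      refine hx.2 ((mem_Icyl_iff m (t+1) x).mpr fun i hi => ?_)
      rcases Nat.lt_succ_iff_lt_or_eq.mp hi with h | h
      · exact h1 i h
      · rw [h]; exact h0
    have hk : ∀ k < n, k ≠ t → x k = 0 := by
      intro k hkn hkt
      have := (mem_Icyl_iff m n _).mp hu k hkn
      rwa [Function.update_of_ne hkt] at this
    exact case_one m htn ht hk
  · intro hx
    exact case_In m ((mem_Icyl_iff m n x).mp hx)
  · rintro ⟨hx, hne⟩
    have hex : ∃ k, k < n ∧ x k ≠ 0 := by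
      by_contra hc
      push_neg at hc
      exact hx ((mem_Icyl_iff m n x).mpr hc)
    classical
    set t := Nat.find hex with htdef
    have htn : t < n := (Nat.find_spec hex).1
    have ht : x t ≠ 0 := (Nat.find_spec hex).2
    have hmin : ∀ k < t, x k = 0 := by
      intro k hk
      by_contra h0
      exact Nat.find_min hex hk ⟨lt_trans hk htn, h0⟩
    have hx1 : x ∈ Icyl m t := (mem_Icyl_iff m t x).mpr hmin
    have hx2 : x ∉ Icyl m (t+1) :=
      fun hmem => ht ((mem_Icyl_iff m (t+1) x).mp hmem t (Nat.lt_succ_self t))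
    have hupd : Function.update x t 0 ∉ Icyl m n :=
      fun hmem => hne ⟨t, htn, ⟨hx1, hx2⟩, hmem⟩
    obtain ⟨s, hsn, hs0⟩ : ∃ s, s < n ∧ Function.update x t 0 s ≠ 0 := by
      by_contra hc
      push_neg at hc
      exact hupd ((mem_Icyl_iff m n _).mpr hc)
    have hst : s ≠ t := fun he => hs0 (by rw [he, Function.update_self])
    have hs : x s ≠ 0 := by rwa [Function.update_of_ne hst] at hs0
    exact case_two m hsn htn hst hs ht

end VilPaper
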